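/- arXiv:2111.11137 — 2 statements merged into one kernel-verified Lean document; each statement's English description precedes it below -/
import Mathlib

section
/- Let R be a field, G a group, ρ₀ multiplicity-free of finite length, and V a ρ₀-typic R[G]-module. If f : ρ̃ → V is a nonzero R[G]-homomorphism from an indecomposable direct summand ρ̃ of ρ₀ whose image is multiplicity free and embeds into ρ̃, then f is injective. -/
open DirectSum

section Defs
variable (A : Type) [Ring A]

abbrev Subquot {M : Type} [AddCommGroup M] [Module A M] (p q : Submodule A M) :=
  ↥q ⧸ Submodule.comap q.subtype p

/-- `S` is a Jordan–Hölder factor (simple subquotient) of `M`. -/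
def IsJHFactor (M : Type) [AddCommGroup M] [Module A M]
    (S : Type) [AddCommGroup S] [Module A S] : Prop :=
  IsSimpleModule A S ∧ ∃ p q : Submodule A M, p ≤ q ∧ Nonempty (Subquot A p q ≃ₗ[A] S)

/-- `M` has finite length and is multiplicity free: it has a composition series with
pairwise non-isomorphic simple factors. -/
def IsMultFree (M : Type) [AddCommGroup M] [Module A M] : Prop :=
  ∃ (n : ℕ) (f : Fin (n+1) → Submodule A M), Monotone f ∧ f 0 = ⊥ ∧ f (Fin.last n) = ⊤ ∧
    (∀ i : Fin n, IsSimpleModule A (Subquot A (f i.castSucc) (f i.succ))) ∧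
    ∀ i j : Fin n, i ≠ j →
      IsEmpty (Subquot A (f i.castSucc) (f i.succ) ≃ₗ[A] Subquot A (f j.castSucc) (f j.succ))

def IsIndecomposable (M : Type) [AddCommGroup M] [Module A M] : Prop :=
  Nontrivial M ∧ ∀ p q : Submodule A M, IsCompl p q → p = ⊥ ∨ q = ⊥

/-- `V` is `P`-typic: `P` decomposes into nonzero indecomposable summands `ρ i`, and
`V ≅ ⊕ᵢ (Wᵢ ⊗ ρ i)` with `Wᵢ` nonzero, expressed via copies `κ i →₀ ρ i`. -/
def IsTypic (P : Type) [AddCommGroup P] [Module A P]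
    (V : Type) [AddCommGroup V] [Module A V] : Prop :=
  ∃ (ι : Type) (_ : Fintype ι) (ρ : ι → Submodule A P),
    iSupIndep ρ ∧ iSup ρ = ⊤ ∧
    (∀ i, IsIndecomposable A ↥(ρ i)) ∧
    ∃ (κ : ι → Type) (_ : ∀ i, Nonempty (κ i)),
      Nonempty (V ≃ₗ[A] ⨁ i, (κ i →₀ ↥(ρ i)))

/-- `M` has an irreducible cosocle, i.e. a greatest proper submodule. -/
def HasSimpleCosocle (M : Type) [AddCommGroup M] [Module A M] : Prop :=
  ∃ N : Submodule A M, N ≠ ⊤ ∧ ∀ P : Submodule A M, P ≠ ⊤ → P ≤ N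

/-- The cosocle of `M` is irreducible and isomorphic to `S`. -/
def HasCosocle (M : Type) [AddCommGroup M] [Module A M]
    (S : Type) [AddCommGroup S] [Module A S] : Prop :=
  ∃ N : Submodule A M, (N ≠ ⊤ ∧ ∀ P : Submodule A M, P ≠ ⊤ → P ≤ N) ∧
    Nonempty ((M ⧸ N) ≃ₗ[A] S)

end Defs

namespace Stmt7Aux

open JordanHolderLattice Submodule

variable {A : Type*} [Ring A] {M : Type*} [AddCommGroup M] [Module A M]

/-- The subquotient `b / a` is isomorphic to the image of `b` in `M / a`. -/
noncomputable def quotCompEquiv (a b : Submodule A M) :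
    (↥b ⧸ a.comap b.subtype) ≃ₗ[A] ↥(b.map a.mkQ) :=
  (Submodule.quotEquivOfEq _ _ (by rw [LinearMap.ker_comp, Submodule.ker_mkQ])).trans
    ((a.mkQ.comp b.subtype).quotKerEquivRange.trans (LinearEquiv.ofEq _ _
      (by rw [LinearMap.range_comp, Submodule.range_subtype])))

theorem map_lt_map_iff {N : Type*} [AddCommGroup N] [Module A N]
    {f : M →ₗ[A] N} (hf : Function.Injective f) {x y : Submodule A M} :
    x.map f < y.map f ↔ x < y := by
  rw [lt_iff_le_not_ge, lt_iff_le_not_ge, Submodule.map_le_map_iff_of_injective hf,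
    Submodule.map_le_map_iff_of_injective hf]

theorem covBy_map_subtype {p : Submodule A M} {x y : Submodule A ↥p}
    (h : x ⋖ y) : x.map p.subtype ⋖ y.map p.subtype := by
  have inj := Submodule.injective_subtype p
  constructor
  · exact (map_lt_map_iff inj).mpr h.1
  · intro z hz1 hz2
    have hzp : z ≤ p := le_trans hz2.le (Submodule.map_subtype_le p y)
    have hzc : (z.comap p.subtype).map p.subtype = z := by
      rw [Submodule.map_comap_subtype, inf_eq_right.mpr hzp]
    have h1 : x < z.comap p.subtype := by rw [← map_lt_map_iff inj, hzc]; exact hz1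
    have h2 : z.comap p.subtype < y := by rw [← map_lt_map_iff inj, hzc]; exact hz2
    exact h.2 h1 h2

theorem mem_smash_left {α : Type*} {r : SetRel α α} {s t : RelSeries r}
    (h : s.last = t.head) {x : α} (hx : x ∈ s) : x ∈ s.smash t h := by
  have hl : (s.smash t h).length = s.length + t.length := rfl
  obtain ⟨j, rfl⟩ := hx
  exact ⟨j.castLE (by simp), RelSeries.smash_castLE h j⟩

theorem mem_smash_right {α : Type*} {r : SetRel α α} {s t : RelSeries r}
    (h : s.last = t.head) {x : α} (hx : x ∈ t) : x ∈ s.smash t h := by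
  have hl : (s.smash t h).length = s.length + t.length := rfl
  obtain ⟨j, rfl⟩ := hx
  refine ⟨Fin.natAdd s.length j, ?_⟩
  dsimp only [RelSeries.smash]
  apply Fin.addCases_right

/-- In a composition series, a covering pair of members is a step. -/
theorem exists_step (s : CompositionSeries (Submodule A M)) {x y : Submodule A M}
    (hxy : x ⋖ y) (hx : x ∈ s) (hy : y ∈ s) :
    ∃ i : Fin s.length, s i.castSucc = x ∧ s i.succ = y := by
  obtain ⟨i, rfl⟩ := hx
  obtain ⟨j, rfl⟩ := hy
  have hij : i < j := s.strictMono.lt_iff_lt.mp hxy.1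
  have hi' : (i : ℕ) < s.length := lt_of_lt_of_le hij (Nat.lt_succ_iff.mp j.isLt)
  have hcast : (Fin.castSucc ⟨(i : ℕ), hi'⟩) = i := by ext; simp
  refine ⟨⟨i, hi'⟩, by rw [hcast], ?_⟩
  have h1 : s i < s (Fin.succ ⟨i, hi'⟩) := by
    conv_lhs => rw [← hcast]
    exact s.lt_succ ⟨(i : ℕ), hi'⟩
  have h2 : s (Fin.succ ⟨i, hi'⟩) ≤ s j :=
    s.strictMono.monotone (by simp [Fin.le_def]; omega)
  rcases lt_or_eq_of_le h2 with h3 | h3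
  · exact absurd h3 (hxy.2 h1)
  · exact h3

/-- Between any two comparable submodules of a finite length module there is a
composition series. -/
theorem exists_series_between [IsNoetherian A M] [IsArtinian A M] (b : Submodule A M) :
    ∀ a : Submodule A M, a ≤ b →
      ∃ t : CompositionSeries (Submodule A M), t.head = a ∧ t.last = b := by
  induction b using WellFoundedLT.induction with
  | _ b ih =>
    intro a hab
    rcases eq_or_lt_of_le hab with rfl | hlt
    · exact ⟨RelSeries.singleton _ a, RelSeries.head_singleton _, RelSeries.last_singleton _⟩
    · obtain ⟨c, ⟨hac, hcb⟩, hmax⟩ :=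
        set_has_maximal_iff_noetherian.mpr ‹IsNoetherian A M›
          {x | a ≤ x ∧ x < b} ⟨a, le_refl a, hlt⟩
      have hcov : c ⋖ b := ⟨hcb, fun z hz1 hz2 => hmax z ⟨le_trans hac hz1.le, hz2⟩ hz1⟩
      obtain ⟨t, ht1, ht2⟩ := ih c hcb a hac
      exact ⟨t.snoc b (show JordanHolderLattice.IsMaximal t.last b from ht2 ▸ hcov),
        by rw [RelSeries.head_snoc, ht1], RelSeries.last_snoc _ _ _⟩

/-- Isomorphism of subquotients. -/
def Iso (X Y : Submodule A M × Submodule A M) : Prop :=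
  Nonempty <| (X.2 ⧸ X.1.comap X.2.subtype) ≃ₗ[A] Y.2 ⧸ Y.1.comap Y.2.subtype

/-- A composition series has pairwise non-isomorphic factors. -/
def Distinct (s : CompositionSeries (Submodule A M)) : Prop :=
  ∀ i j : Fin s.length, i ≠ j →
    ¬ Iso (s i.castSucc, s i.succ) (s j.castSucc, s j.succ)

theorem distinct_of_equivalent {s t : CompositionSeries (Submodule A M)}
    (h : s.Equivalent t) (ht : Distinct t) : Distinct s := by
  obtain ⟨e, he⟩ := h
  intro i j hij hiso
  exact ht (e i) (e j) (fun h' => hij (e.injective h'))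
    ⟨((he i).linearEquiv.symm.trans hiso.some).trans (he j).linearEquiv⟩

theorem distinct_all {s₀ : CompositionSeries (Submodule A M)}
    (h0 : s₀.head = ⊥) (h0' : s₀.last = ⊤) (hd : Distinct s₀)
    (s : CompositionSeries (Submodule A M)) (hs : s.head = ⊥) (hs' : s.last = ⊤) :
    Distinct s :=
  distinct_of_equivalent
    (CompositionSeries.jordan_holder s s₀ (by rw [hs, h0]) (by rw [hs', h0'])) hd

end Stmt7Aux

namespace Stmt7Aux

open JordanHolderLattice Submodule

variable {A : Type*} [Ring A] {M : Type*} [AddCommGroup M] [Module A M]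

noncomputable def mapSubtypeQuotEquiv (p : Submodule A M) (x y : Submodule A ↥p) :
    (↥y ⧸ x.comap y.subtype) ≃ₗ[A]
      (↥(y.map p.subtype) ⧸ (x.map p.subtype).comap (y.map p.subtype).subtype) := by
  have inj := Submodule.injective_subtype p
  refine Submodule.Quotient.equiv _ _ (Submodule.equivMapOfInjective p.subtype inj y) ?_
  ext z
  simp only [Submodule.mem_map, Submodule.mem_comap]
  constructor
  · rintro ⟨w, hw, rfl⟩
    refine ⟨(w : ↥p), hw, ?_⟩
    exact (Submodule.coe_equivMapOfInjective_apply p.subtype inj y w).symm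
  · rintro ⟨u, hu, hcoe⟩
    obtain ⟨v, hv, hv2⟩ := z.2
    have huv : u = v := by
      apply inj
      rw [hcoe]; exact hv2.symm
    refine ⟨⟨v, hv⟩, ?_, ?_⟩
    · show (v : ↥p) ∈ x
      rw [← huv]; exact hu
    · apply Subtype.ext
      show p.subtype v = _
      exact hv2

theorem core [IsNoetherian A M] [IsArtinian A M]
    (HD : ∀ s : CompositionSeries (Submodule A M), s.head = ⊥ → s.last = ⊤ → Distinct s)
    (N Q : Submodule A M) (e : (M ⧸ N) ≃ₗ[A] ↥Q) : N ⊓ Q = ⊥ := by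
  by_contra hne
  have hatomic : IsAtomic (Submodule A M) :=
    isAtomic_of_orderBot_wellFounded_lt wellFounded_lt
  rcases hatomic.eq_bot_or_exists_atom_le (N ⊓ Q) with h | ⟨S, hS, hSle⟩
  · exact hne h
  have hSN : S ≤ N := hSle.trans inf_le_left
  have hSQ : S ≤ Q := hSle.trans inf_le_right
  haveI hSsimple : IsSimpleModule A ↥S := isSimpleModule_iff_isAtom.mpr hS
  set T : Submodule A (M ⧸ N) := (S.comap Q.subtype).map (e.symm : ↥Q →ₗ[A] M ⧸ N) with hT
  set K : Submodule A M := T.comap N.mkQ with hK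
  have hNK : N ≤ K := by
    intro x hx
    simp only [hK, Submodule.mem_comap]
    have hx0 : N.mkQ x = 0 := (Submodule.Quotient.mk_eq_zero N).mpr hx
    rw [hx0]; exact T.zero_mem
  have hmapK : K.map N.mkQ = T := by
    rw [hK, Submodule.map_comap_eq, Submodule.range_mkQ, top_inf_eq]
  have eT : ↥T ≃ₗ[A] ↥S :=
    ((Submodule.equivMapOfInjective (e.symm : ↥Q →ₗ[A] M ⧸ N) e.symm.injective _).symm).trans
      (Submodule.comapSubtypeEquivOfLe hSQ)
  have factorK : (↥K ⧸ N.comap K.subtype) ≃ₗ[A] ↥S :=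
    (quotCompEquiv N K).trans ((LinearEquiv.ofEq _ _ hmapK).trans eT)
  have hNKcov : N ⋖ K :=
    (covBy_iff_quot_is_simple hNK).mpr (IsSimpleModule.congr factorK)
  have factorS : (↥S ⧸ (⊥ : Submodule A M).comap S.subtype) ≃ₗ[A] ↥S :=
    Submodule.quotEquivOfEqBot _ (by rw [Submodule.comap_bot, Submodule.ker_subtype])
  obtain ⟨s2, hs2h, hs2l⟩ := exists_series_between N S hSN
  obtain ⟨s4, hs4h, hs4l⟩ := exists_series_between (⊤ : Submodule A M) K le_top
  set pair1 : CompositionSeries (Submodule A M) :=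
    (RelSeries.singleton _ (⊥ : Submodule A M)).snoc S
      (by rw [RelSeries.last_singleton]; exact hS.bot_covBy) with hpair1
  set pair3 : CompositionSeries (Submodule A M) :=
    (RelSeries.singleton _ N).snoc K
      (by rw [RelSeries.last_singleton]; exact hNKcov) with hpair3
  have h12 : pair1.last = s2.head := by
    rw [hpair1, RelSeries.last_snoc, hs2h]
  have h34 : pair3.last = s4.head := by
    rw [hpair3, RelSeries.last_snoc, hs4h]
  have h23 : (pair1.smash s2 h12).last = (pair3.smash s4 h34).head := by
    rw [RelSeries.last_smash, hs2l, RelSeries.head_smash, hpair3, RelSeries.head_snoc,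
      RelSeries.head_singleton]
  set s : CompositionSeries (Submodule A M) :=
    (pair1.smash s2 h12).smash (pair3.smash s4 h34) h23 with hs
  have hsh : s.head = ⊥ := by
    rw [hs, RelSeries.head_smash, RelSeries.head_smash, hpair1, RelSeries.head_snoc,
      RelSeries.head_singleton]
  have hsl : s.last = ⊤ := by
    rw [hs, RelSeries.last_smash, RelSeries.last_smash, hs4l]
  have hmem_bot : (⊥ : Submodule A M) ∈ s :=
    mem_smash_left _ (mem_smash_left _
      (RelSeries.mem_snoc.mpr (Or.inl ⟨0, rfl⟩)))
  have hmem_S : S ∈ s :=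
    mem_smash_left _ (mem_smash_left _ (RelSeries.mem_snoc.mpr (Or.inr rfl)))
  have hmem_N : N ∈ s :=
    mem_smash_right _ (mem_smash_left _ (RelSeries.mem_snoc.mpr (Or.inl ⟨0, rfl⟩)))
  have hmem_K : K ∈ s :=
    mem_smash_right _ (mem_smash_left _ (RelSeries.mem_snoc.mpr (Or.inr rfl)))
  obtain ⟨i, hi1, hi2⟩ := exists_step s hS.bot_covBy hmem_bot hmem_S
  obtain ⟨j, hj1, hj2⟩ := exists_step s hNKcov hmem_N hmem_K
  have hij : i ≠ j := by
    intro hEq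
    have hNbot : N = ⊥ := by rw [← hj1, ← hEq, hi1]
    exact hS.1 (le_bot_iff.mp (hNbot ▸ hSN))
  refine HD s hsh hsl i j hij ?_
  rw [hi1, hi2, hj1, hj2]
  exact ⟨factorS.trans factorK.symm⟩

theorem HD_submodule [IsNoetherian A M] [IsArtinian A M]
    (HD : ∀ s : CompositionSeries (Submodule A M), s.head = ⊥ → s.last = ⊤ → Distinct s)
    (p : Submodule A M) (t : CompositionSeries (Submodule A ↥p))
    (hth : t.head = ⊥) (htl : t.last = ⊤) : Distinct t := by
  intro i j hij hiso
  let t' : CompositionSeries (Submodule A M) :=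
    ⟨t.length, fun k => (t k).map p.subtype,
      fun k => covBy_map_subtype (t.step k)⟩
  have ht'h : t'.head = ⊥ := by
    show (t.head).map p.subtype = ⊥
    rw [hth, Submodule.map_bot]
  have ht'l : t'.last = p := by
    show (t.last).map p.subtype = p
    rw [htl, Submodule.map_top, Submodule.range_subtype]
  obtain ⟨s4, hs4h, hs4l⟩ := exists_series_between (⊤ : Submodule A M) p le_top
  set s : CompositionSeries (Submodule A M) := t'.smash s4 (by rw [ht'l, hs4h]) with hs
  have hsh : s.head = ⊥ := by rw [hs, RelSeries.head_smash, ht'h]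
  have hsl : s.last = ⊤ := by rw [hs, RelSeries.last_smash, hs4l]
  have hd := HD s hsh hsl
  have hmem : ∀ k : Fin (t.length + 1), (t k).map p.subtype ∈ s :=
    fun k => mem_smash_left _ ⟨k, rfl⟩
  obtain ⟨i', hi1, hi2⟩ := exists_step s (covBy_map_subtype (t.step i))
    (hmem i.castSucc) (hmem i.succ)
  obtain ⟨j', hj1, hj2⟩ := exists_step s (covBy_map_subtype (t.step j))
    (hmem j.castSucc) (hmem j.succ)
  have inj := Submodule.injective_subtype p
  have hij' : i' ≠ j' := by
    intro hEq
    apply hij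
    have h1 : (t i.castSucc).map p.subtype = (t j.castSucc).map p.subtype := by
      rw [← hi1, hEq, hj1]
    have h2 := Submodule.map_injective_of_injective inj h1
    have h3 : i.castSucc = j.castSucc := t.injective h2
    exact Fin.castSucc_injective _ h3
  refine hd i' j' hij' ?_
  rw [hi1, hi2, hj1, hj2]
  obtain ⟨q⟩ := hiso
  exact ⟨((mapSubtypeQuotEquiv p _ _).symm.trans q).trans (mapSubtypeQuotEquiv p _ _)⟩

end Stmt7Aux

/-- a nonzero map from an indecomposable direct summand `p` of `ρ₀` to a
`ρ₀`-typic module, whose image is multiplicity free and embeds into `p`, is injective. -/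
theorem stmt7 {R G : Type} [Field R] [Group G]
    (P : Type) [AddCommGroup P] [Module (MonoidAlgebra R G) P]
    (V : Type) [AddCommGroup V] [Module (MonoidAlgebra R G) V]
    (hmf : IsMultFree (MonoidAlgebra R G) P)
    (htypic : IsTypic (MonoidAlgebra R G) P V)
    (p : Submodule (MonoidAlgebra R G) P)
    (hsummand : ∃ q, IsCompl p q)
    (hind : IsIndecomposable (MonoidAlgebra R G) ↥p)
    (f : ↥p →ₗ[MonoidAlgebra R G] V) (hf : f ≠ 0)
    (himmf : IsMultFree (MonoidAlgebra R G) ↥(LinearMap.range f))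
    (hemb : ∃ g : ↥(LinearMap.range f) →ₗ[MonoidAlgebra R G] ↥p, Function.Injective g) :
    Function.Injective f := by
  classical
  set A := MonoidAlgebra R G with hA
  -- a multiplicity-free composition series of `P`
  obtain ⟨n, c, hmono, hc0, hclast, hsimple, hdist⟩ := hmf
  have hstep : ∀ i : Fin n,
      JordanHolderLattice.IsMaximal (c i.castSucc) (c i.succ) :=
    fun i => (covBy_iff_quot_is_simple (hmono (Fin.castSucc_le_succ i))).mpr (hsimple i)
  set s₀ : CompositionSeries (Submodule A P) := ⟨n, c, hstep⟩ with hs₀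
  have hs₀h : s₀.head = ⊥ := hc0
  have hs₀l : s₀.last = ⊤ := hclast
  have hs₀d : Stmt7Aux.Distinct s₀ := by
    intro i j hij h
    obtain ⟨q⟩ := h
    exact (hdist i j hij).false q
  have hfl : IsFiniteLength A P :=
    isFiniteLength_of_exists_compositionSeries ⟨s₀, hs₀h, hs₀l⟩
  haveI : IsNoetherian A P := (isFiniteLength_iff_isNoetherian_isArtinian.mp hfl).1
  haveI : IsArtinian A P := (isFiniteLength_iff_isNoetherian_isArtinian.mp hfl).2
  have HDP : ∀ s : CompositionSeries (Submodule A P),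
      s.head = ⊥ → s.last = ⊤ → Stmt7Aux.Distinct s :=
    Stmt7Aux.distinct_all hs₀h hs₀l hs₀d
  have HDp := Stmt7Aux.HD_submodule HDP p
  -- the endomorphism `φ` of `p`
  obtain ⟨g, hg⟩ := hemb
  set N : Submodule A ↥p := LinearMap.ker f with hN
  set Q₀ : Submodule A ↥p := LinearMap.range g with hQ
  have e : (↥p ⧸ N) ≃ₗ[A] ↥Q₀ := f.quotKerEquivRange.trans (LinearEquiv.ofInjective g hg)
  set φ : ↥p →ₗ[A] ↥p := Q₀.subtype ∘ₗ (e : (↥p ⧸ N) →ₗ[A] ↥Q₀) ∘ₗ N.mkQ with hφ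
  have hker : LinearMap.ker φ = N := by
    ext x
    simp only [hφ, LinearMap.mem_ker, LinearMap.comp_apply, LinearEquiv.coe_coe,
      Submodule.coe_subtype, ZeroMemClass.coe_eq_zero, LinearEquiv.map_eq_zero_iff,
      Submodule.mkQ_apply, Submodule.Quotient.mk_eq_zero]
  have hrange : LinearMap.range φ = Q₀ := by
    apply le_antisymm
    · rintro y ⟨x, rfl⟩
      simp only [hφ, LinearMap.comp_apply]
      exact Submodule.coe_mem _
    · rintro y hy
      obtain ⟨z, hz⟩ := e.surjective ⟨y, hy⟩
      obtain ⟨x, rfl⟩ := N.mkQ_surjective z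
      exact ⟨x, by simp only [hφ, LinearMap.comp_apply, LinearEquiv.coe_coe, hz,
        Submodule.coe_subtype]⟩
  have hNQ : N ⊓ Q₀ = ⊥ := Stmt7Aux.core HDp N Q₀ e
  -- kernels of powers of `φ` are all `N`
  have hker_pow : ∀ k : ℕ, LinearMap.ker (φ ^ (k + 1)) = N := by
    intro k
    induction k with
    | zero => simpa using hker
    | succ k ih =>
      ext x
      constructor
      · intro hx
        have h1 : (φ ^ (k + 1)) (φ x) = 0 := by
          have h2 : (φ ^ (k + 2)) x = (φ ^ (k + 1)) (φ x) := by
            rw [pow_succ, Module.End.mul_apply]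
          rw [← h2]
          exact hx
        have h2 : φ x ∈ N := ih ▸ LinearMap.mem_ker.mpr h1
        have h3 : φ x ∈ Q₀ := hrange ▸ LinearMap.mem_range_self φ x
        have h4 : φ x = 0 := by
          have h5 : φ x ∈ N ⊓ Q₀ := Submodule.mem_inf.mpr ⟨h2, h3⟩
          rw [hNQ] at h5
          simpa using h5
        have h6 : x ∈ LinearMap.ker φ := LinearMap.mem_ker.mpr h4
        rw [hker] at h6
        exact h6
      · intro hx
        have h0 : φ x = 0 := by
          rw [← hker] at hx
          exact hx
        exact LinearMap.mem_ker.mpr (by rw [pow_succ, Module.End.mul_apply, h0, map_zero])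
  -- ranges of powers of `φ` are decreasing and stabilize
  have hmono' : ∀ {a b : ℕ}, a ≤ b → LinearMap.range (φ ^ b) ≤ LinearMap.range (φ ^ a) := by
    intro a b hab
    obtain ⟨d, rfl⟩ := Nat.exists_eq_add_of_le hab
    rintro y ⟨x, rfl⟩
    exact ⟨(φ ^ d) x, by rw [pow_add, Module.End.mul_apply]⟩
  obtain ⟨n₀, hn₀⟩ := IsArtinian.monotone_stabilizes
    (⟨fun k => LinearMap.range (φ ^ k), fun a b hab => hmono' hab⟩ : ℕ →o (Submodule A ↥p)ᵒᵈ)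
  set m : ℕ := n₀ + 1 with hm
  have hstab : LinearMap.range (φ ^ m) = LinearMap.range (φ ^ (m + m)) :=
    (hn₀ m (by omega)).symm.trans (hn₀ (m + m) (by omega))
  have hsup : N ⊔ LinearMap.range (φ ^ m) = ⊤ := by
    rw [eq_top_iff]
    intro x _
    have h1 : (φ ^ m) x ∈ LinearMap.range (φ ^ (m + m)) :=
      hstab ▸ LinearMap.mem_range_self _ x
    obtain ⟨y, hy⟩ := h1
    have hz : x - (φ ^ m) y ∈ N := by
      rw [← hker_pow n₀, ← hm]
      refine LinearMap.mem_ker.mpr ?_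
      have h2 : (φ ^ m) ((φ ^ m) y) = (φ ^ m) x := by
        rw [← Module.End.mul_apply, ← pow_add, hy]
      rw [map_sub, h2, sub_self]
    have hx2 : x = (x - (φ ^ m) y) + (φ ^ m) y := by abel
    rw [hx2]
    exact Submodule.add_mem_sup hz ⟨y, rfl⟩
  have hinf : N ⊓ LinearMap.range (φ ^ m) = ⊥ := by
    apply le_bot_iff.mp
    rw [← hNQ]
    refine inf_le_inf_left _ ?_
    have h1 : LinearMap.range (φ ^ m) ≤ LinearMap.range (φ ^ 1) := hmono' (by omega)
    rw [pow_one, hrange] at h1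
    exact h1
  have hcompl : IsCompl N (LinearMap.range (φ ^ m)) :=
    ⟨disjoint_iff.mpr hinf, codisjoint_iff.mpr hsup⟩
  rcases hind.2 _ _ hcompl with hNbot | hRbot
  · rw [hN] at hNbot
    exact LinearMap.ker_eq_bot.mp hNbot
  · exfalso
    have hNtop : N = ⊤ := by rw [← hsup, hRbot, sup_bot_eq]
    rw [hN] at hNtop
    exact hf (LinearMap.ker_eq_top.mp hNtop)
end

section
/- Let R be a field, G a group, and ρ₀ a multiplicity-free finite-length R[G]-module. For each Jordan–Hölder factor τ of ρ₀, there exists a unique R[G]-submodule ρ_τ ⊆ ρ₀ whose cosocle is isomorphic to τ. -/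
open DirectSum

section Aux

open Submodule

variable {A : Type} [Ring A] {M : Type} [AddCommGroup M] [Module A M]
variable {S : Type} [AddCommGroup S] [Module A S]

private lemma subquot_cast {a b a' b' : Submodule A M} (h1 : a = a') (h2 : b = b') :
    Nonempty (Subquot A a b ≃ₗ[A] Subquot A a' b') := by
  subst h1; subst h2; exact ⟨LinearEquiv.refl _ _⟩

private lemma subquot_self_subsingleton (a : Submodule A M) :
    Subsingleton (Subquot A a a) := by
  obtain ⟨u⟩ := Submodule.unique_quotient_iff_eq_top.mpr (comap_subtype_self a)
  exact u.instSubsingleton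

private lemma eq_of_between {p q x : Submodule A M} (hpq : p ≤ q)
    (hs : IsSimpleModule A (Subquot A p q)) (hx1 : p ≤ x) (hx2 : x ≤ q) :
    x = p ∨ x = q := by
  haveI := hs
  rcases eq_bot_or_eq_top (map (comap q.subtype p).mkQ (comap q.subtype x)) with hy | hy
  · left
    have h1 : comap q.subtype x ≤ comap q.subtype p := by
      rw [← Submodule.ker_mkQ (comap q.subtype p), ← comap_bot]
      rw [← le_bot_iff, map_le_iff_le_comap] at hy
      exact hy
    have h2 := Submodule.map_mono (f := q.subtype) h1
    rw [map_comap_subtype, map_comap_subtype, inf_eq_right.mpr hx2, inf_eq_right.mpr hpq] at h2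
    exact Or.inl (le_antisymm h2 hx1) |>.elim id (fun h => h)
  · right
    rw [Submodule.map_mkQ_eq_top] at hy
    have h2 := congrArg (Submodule.map q.subtype) hy
    rw [Submodule.map_sup, map_comap_subtype, map_comap_subtype, Submodule.map_top,
      range_subtype, inf_eq_right.mpr hx2, inf_eq_right.mpr hpq] at h2
    rw [sup_eq_right.mpr hx1] at h2
    exact h2

private lemma pullback_iso {p q N : Submodule A M} (hpq : p ≤ q) (h : p ⊔ q ⊓ N = q) :
    Nonempty (Subquot A (p ⊓ N) (q ⊓ N) ≃ₗ[A] Subquot A p q) := by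
  have h1 : q ⊓ N ⊓ p = p ⊓ N := by
    rw [inf_comm (q ⊓ N) p, ← inf_assoc, inf_eq_left.mpr hpq]
  have h2 : q ⊓ N ⊔ p = q := by rw [sup_comm]; exact h
  have e := LinearMap.quotientInfEquivSupQuotient (q ⊓ N) p
  obtain ⟨c1⟩ := subquot_cast (A := A) h1.symm (rfl : q ⊓ N = q ⊓ N)
  obtain ⟨c2⟩ := subquot_cast (A := A) (rfl : p = p) h2
  exact ⟨c1.trans (e.trans c2)⟩

private lemma pushout_iso {p q N : Submodule A M} (hpq : p ≤ q) (h : q ⊓ N ≤ p) :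
    Nonempty (Subquot A (p ⊔ N) (q ⊔ N) ≃ₗ[A] Subquot A p q) := by
  have h1 : q ⊓ (p ⊔ N) = p := by
    rw [inf_comm, sup_inf_assoc_of_le N hpq, inf_comm N q]
    exact sup_eq_left.mpr h
  have h2 : q ⊔ (p ⊔ N) = q ⊔ N := by rw [← sup_assoc, sup_eq_left.mpr hpq]
  have e := LinearMap.quotientInfEquivSupQuotient q (p ⊔ N)
  obtain ⟨c0⟩ := subquot_cast (A := A) (rfl : p ⊔ N = p ⊔ N) h2.symm
  obtain ⟨c1⟩ := subquot_cast (A := A) h1 (rfl : q = q)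
  exact ⟨c0.trans (e.symm.trans c1)⟩

private lemma step_dichotomy {a b : Submodule A M} (hab : a ≤ b)
    (hs : IsSimpleModule A (Subquot A a b)) (N : Submodule A M) :
    (Nonempty (Subquot A (a ⊓ N) (b ⊓ N) ≃ₗ[A] Subquot A a b) ∧ a ⊔ N = b ⊔ N) ∨
    (a ⊓ N = b ⊓ N ∧ Nonempty (Subquot A (a ⊔ N) (b ⊔ N) ≃ₗ[A] Subquot A a b)) := by
  rcases eq_of_between hab hs (le_sup_left : a ≤ a ⊔ b ⊓ N) (sup_le hab inf_le_left) with hx | hx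
  · have h : b ⊓ N ≤ a := by rw [← hx]; exact le_sup_right
    exact Or.inr ⟨le_antisymm (inf_le_inf_right N hab) (le_inf h inf_le_right),
      pushout_iso hab h⟩
  · refine Or.inl ⟨pullback_iso hab hx, le_antisymm (sup_le_sup_right hab N) ?_⟩
    have hb : b ≤ a ⊔ N := by
      rw [← hx]; exact sup_le le_sup_left (le_trans inf_le_right le_sup_right)
    exact sup_le hb le_sup_right

private def Phi (S : Type) [AddCommGroup S] [Module A S] (a b : Submodule A M) : Prop :=
  ∃ p q : Submodule A M, a ≤ p ∧ p ≤ q ∧ q ≤ b ∧ Nonempty (Subquot A p q ≃ₗ[A] S)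

private lemma phi_not_self (hs : Nontrivial S) {a : Submodule A M}
    (h : Phi S a a) : False := by
  obtain ⟨p, q, h1, h2, h3, ⟨e⟩⟩ := h
  have hp : p = a := le_antisymm (h2.trans h3) h1
  have hq : q = a := le_antisymm h3 (h1.trans h2)
  subst hp
  rw [hq] at e
  haveI := subquot_self_subsingleton (A := A) p
  haveI : Subsingleton S := e.symm.toEquiv.subsingleton
  exact false_of_nontrivial_of_subsingleton S

private lemma phi_simple (hs : Nontrivial S) {a b : Submodule A M} (hab : a ≤ b)
    (hsimp : IsSimpleModule A (Subquot A a b)) (h : Phi S a b) :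
    Nonempty (Subquot A a b ≃ₗ[A] S) := by
  obtain ⟨p, q, h1, h2, h3, he⟩ := h
  have hpq : p ≠ q := by
    rintro rfl
    exact phi_not_self hs ⟨p, p, le_rfl, le_rfl, le_rfl, he⟩
  rcases eq_of_between hab hsimp h1 (h2.trans h3) with hp | hp
  · rcases eq_of_between hab hsimp (h1.trans h2) h3 with hq | hq
    · exact absurd (hp.trans hq.symm) hpq
    · obtain ⟨c⟩ := subquot_cast (A := A) hp hq
      obtain ⟨e⟩ := he
      exact ⟨c.symm.trans e⟩
  · have hq : q = b := le_antisymm h3 (hp ▸ h2)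
    exact absurd (hp.trans hq.symm) hpq

private lemma phi_split (hs : IsSimpleModule A S) {a b c : Submodule A M}
    (hab : a ≤ b) (hbc : b ≤ c) (h : Phi S a c) :
    Phi S a b ∨ Phi S b c := by
  obtain ⟨p, q, h1, h2, h3, ⟨e⟩⟩ := h
  haveI := hs
  have hsimp : IsSimpleModule A (Subquot A p q) := IsSimpleModule.congr e
  rcases step_dichotomy h2 hsimp b with ⟨⟨e1⟩, -⟩ | ⟨-, ⟨e1⟩⟩
  · exact Or.inl ⟨p ⊓ b, q ⊓ b, le_inf h1 hab, inf_le_inf_right b h2, inf_le_right,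
      ⟨e1.trans e⟩⟩
  · exact Or.inr ⟨p ⊔ b, q ⊔ b, le_sup_right, sup_le_sup_right h2 b, sup_le h3 hbc,
      ⟨e1.trans e⟩⟩

private lemma phi_chain (hs : Nontrivial S) (hs' : IsSimpleModule A S) :
    ∀ {m : ℕ} (g : Fin (m+1) → Submodule A M), Monotone g →
      Phi S (g 0) (g (Fin.last m)) → ∃ i : Fin m, Phi S (g i.castSucc) (g i.succ) := by
  intro m
  induction m with
  | zero =>
    intro g _ h
    rw [Fin.fin_one_eq_zero (Fin.last 0)] at h
    exact (phi_not_self hs h).elim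
  | succ m ih =>
    intro g hg h
    rcases phi_split hs' (hg (Fin.zero_le ((Fin.last m).castSucc)))
        (hg (Fin.le_last ((Fin.last m).castSucc))) h with h' | h'
    · obtain ⟨i, hi⟩ := ih (fun k => g k.castSucc)
        (fun x y hxy => hg (Fin.castSucc_le_castSucc_iff.mpr hxy))
        (by simpa only [Fin.castSucc_zero] using h')
      exact ⟨i.castSucc, by simpa only [Fin.succ_castSucc] using hi⟩
    · exact ⟨Fin.last m, by simpa only [Fin.succ_last] using h'⟩

private lemma key (hs' : IsSimpleModule A S) {n : ℕ} (f : Fin (n+1) → Submodule A M)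
    (hmono : Monotone f) (hbot : f 0 = ⊥) (htop : f (Fin.last n) = ⊤)
    (hsimple : ∀ i : Fin n, IsSimpleModule A (Subquot A (f i.castSucc) (f i.succ)))
    (hni : ∀ i j : Fin n, i ≠ j →
      IsEmpty (Subquot A (f i.castSucc) (f i.succ) ≃ₗ[A] Subquot A (f j.castSucc) (f j.succ)))
    (N : Submodule A M) (h1 : Phi S ⊥ N) (h2 : Phi S N ⊤) : False := by
  haveI := hs'
  have hnt : Nontrivial S := IsSimpleModule.nontrivial A S
  obtain ⟨i, hi⟩ := phi_chain hnt hs' (fun k => f k ⊓ N)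
    (fun x y hxy => inf_le_inf_right N (hmono hxy))
    (by simpa [hbot, htop] using h1)
  obtain ⟨j, hj⟩ := phi_chain hnt hs' (fun k => f k ⊔ N)
    (fun x y hxy => sup_le_sup_right (hmono hxy) N)
    (by simpa [hbot, htop] using h2)
  rcases step_dichotomy (hmono (Fin.castSucc_lt_succ : i.castSucc < i.succ).le) (hsimple i) N with
    ⟨⟨e1⟩, heq⟩ | ⟨heq, -⟩
  · rcases step_dichotomy (hmono (Fin.castSucc_lt_succ : j.castSucc < j.succ).le) (hsimple j) N with
      ⟨-, heq'⟩ | ⟨-, ⟨e2⟩⟩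
    · exact phi_not_self hnt (heq' ▸ hj)
    · have hsimp2 : IsSimpleModule A (Subquot A (f i.castSucc ⊓ N) (f i.succ ⊓ N)) := by
        haveI := hsimple i; exact IsSimpleModule.congr e1
      obtain ⟨eS⟩ := phi_simple hnt (inf_le_inf_right N (hmono (Fin.castSucc_lt_succ : i.castSucc < i.succ).le))
        hsimp2 hi
      have hsimp3 : IsSimpleModule A (Subquot A (f j.castSucc ⊔ N) (f j.succ ⊔ N)) := by
        haveI := hsimple j; exact IsSimpleModule.congr e2
      obtain ⟨eS'⟩ := phi_simple hnt (sup_le_sup_right (hmono (Fin.castSucc_lt_succ : j.castSucc < j.succ).le) N)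
        hsimp3 hj
      have hij : i = j := by
        by_contra hne
        exact (hni i j hne).false ((e1.symm.trans eS).trans (e2.symm.trans eS').symm)
      subst hij
      exact phi_not_self hnt (heq ▸ hj)
  · exact phi_not_self hnt (heq ▸ hi)

end Aux


/-- in a multiplicity-free finite-length module, each Jordan–Hölder
factor `τ` is the cosocle of a unique submodule. -/
theorem stmt11 {R G : Type} [Field R] [Group G]
    (P : Type) [AddCommGroup P] [Module (MonoidAlgebra R G) P]
    (hmf : IsMultFree (MonoidAlgebra R G) P)
    (S : Type) [AddCommGroup S] [Module (MonoidAlgebra R G) S]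
    (hS : IsJHFactor (MonoidAlgebra R G) P S) :
    ∃! p : Submodule (MonoidAlgebra R G) P, HasCosocle (MonoidAlgebra R G) ↥p S := by
  classical
  open Submodule in
  obtain ⟨hSsimple, p0, q0, hpq0, hiso0⟩ := hS
  obtain ⟨n, f, hmono, hbot, htop, hsimple, hni⟩ := hmf
  haveI := hSsimple
  have hnt : Nontrivial S := IsSimpleModule.nontrivial (MonoidAlgebra R G) S
  -- finite length, hence Noetherian and Artinian
  have hcov : ∀ i : Fin n, f i.castSucc ⋖ f i.succ := fun i =>
    (covBy_iff_quot_is_simple (hmono (Fin.castSucc_lt_succ : i.castSucc < i.succ).le)).mpr (hsimple i)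
  have hfl : IsFiniteLength (MonoidAlgebra R G) P :=
    isFiniteLength_of_exists_compositionSeries ⟨⟨n, f, hcov⟩, hbot, htop⟩
  obtain ⟨hNoeth, hArt⟩ := isFiniteLength_iff_isNoetherian_isArtinian.mp hfl
  haveI := hNoeth
  haveI := hArt
  -- the least submodule having `S` as a Jordan–Hölder factor
  have hkey := key (S := S) hSsimple f hmono hbot htop hsimple hni
  have htopmem : Phi S ⊥ (⊤ : Submodule (MonoidAlgebra R G) P) :=
    ⟨p0, q0, bot_le, hpq0, le_top, hiso0⟩
  obtain ⟨ρ, hρmem, hρmin⟩ :=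
    (hArt.wf).has_min {N : Submodule (MonoidAlgebra R G) P | Phi S ⊥ N} ⟨⊤, htopmem⟩
  have hleast : ∀ N : Submodule (MonoidAlgebra R G) P, Phi S ⊥ N → ρ ≤ N := by
    intro N hN
    have hmem : Phi S ⊥ (ρ ⊓ N) := by
      rcases phi_split hSsimple bot_le (inf_le_right : ρ ⊓ N ≤ N) hN with h' | h'
      · exact h'
      · exfalso
        obtain ⟨p, q, hp1, hp2, hp3, ⟨e⟩⟩ := h'
        have hqn : q ⊓ ρ ≤ p :=
          (le_inf inf_le_right ((inf_le_left : q ⊓ ρ ≤ q).trans hp3)).trans hp1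
        obtain ⟨e2⟩ := pushout_iso hp2 hqn
        exact hkey ρ hρmem
          ⟨p ⊔ ρ, q ⊔ ρ, le_sup_right, sup_le_sup_right hp2 ρ, le_top, ⟨e2.trans e⟩⟩
    have h1 := hρmin _ hmem
    have h2 : ρ ⊓ N = ρ := ((inf_le_left : ρ ⊓ N ≤ ρ).lt_or_eq).resolve_left h1
    exact inf_eq_left.mp h2
  have hρne : ρ ≠ ⊥ := by
    rintro rfl
    exact phi_not_self hnt hρmem
  -- a maximal proper submodule of ρ
  obtain ⟨Nc, hNclt, hNcmax⟩ :=
    ((inferInstance : WellFoundedGT (Submodule (MonoidAlgebra R G) P)).wf).has_min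
      {x : Submodule (MonoidAlgebra R G) P | x < ρ} ⟨⊥, bot_lt_iff_ne_bot.mpr hρne⟩
  have hcov2 : Nc ⋖ ρ := ⟨hNclt, fun c hNc hc => hNcmax c hc hNc⟩
  have hsimpNc : IsSimpleModule (MonoidAlgebra R G) (Subquot (MonoidAlgebra R G) Nc ρ) :=
    (covBy_iff_quot_is_simple hNclt.le).mp hcov2
  have hPhiNcρ : Phi S Nc ρ := by
    rcases phi_split hSsimple bot_le hNclt.le hρmem with h' | h'
    · exact absurd (hleast Nc h') hNclt.not_ge
    · exact h'
  obtain ⟨eNc⟩ := phi_simple hnt hNclt.le hsimpNc hPhiNcρ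
  -- Nc is the greatest proper submodule of ρ
  have hgreat : ∀ x : Submodule (MonoidAlgebra R G) P, x < ρ → x ≤ Nc := by
    intro x hx
    by_contra hxN
    have hlt : Nc < Nc ⊔ x :=
      lt_of_le_of_ne le_sup_left (fun hh => hxN (le_sup_right.trans hh.symm.le))
    have hsup : Nc ⊔ x = ρ := by
      rcases (sup_le hNclt.le hx.le : Nc ⊔ x ≤ ρ).lt_or_eq with h2 | h2
      · exact absurd h2 (hcov2.2 hlt)
      · exact h2
    have e := LinearMap.quotientInfEquivSupQuotient x Nc
    have hxNc : x ⊔ Nc = ρ := by rw [sup_comm]; exact hsup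
    obtain ⟨c⟩ := subquot_cast (A := MonoidAlgebra R G) (rfl : Nc = Nc) hxNc
    have hx' : Phi S ⊥ x :=
      ⟨x ⊓ Nc, x, bot_le, inf_le_left, le_rfl, ⟨e.trans (c.trans eNc)⟩⟩
    exact absurd (hleast x hx') hx.not_ge
  refine ⟨ρ, ⟨comap ρ.subtype Nc, ⟨?_, ?_⟩, ⟨eNc⟩⟩, ?_⟩
  · -- the cosocle is proper
    intro h
    exact hNclt.not_ge (comap_subtype_eq_top.mp h)
  · -- every proper submodule of ρ lies in it
    intro Q hQ
    have hmaple : map ρ.subtype Q ≤ ρ := map_subtype_le ρ Q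
    have hmaplt : map ρ.subtype Q < ρ := by
      rcases hmaple.lt_or_eq with h | h
      · exact h
      · exfalso
        apply hQ
        have := congrArg (comap ρ.subtype) h
        rwa [comap_map_eq_of_injective (injective_subtype ρ) Q, comap_subtype_self] at this
    calc Q = comap ρ.subtype (map ρ.subtype Q) :=
            (comap_map_eq_of_injective (injective_subtype ρ) Q).symm
      _ ≤ comap ρ.subtype Nc := comap_mono (hgreat _ hmaplt)
  · -- uniqueness
    intro p hp
    obtain ⟨N', ⟨hN'ne, hN'max⟩, ⟨ep⟩⟩ := hp
    have hmem : Phi S ⊥ p := by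
      refine ⟨map p.subtype N', p, bot_le, map_subtype_le p N', le_rfl, ?_⟩
      exact ⟨(Submodule.quotEquivOfEq _ _
        (comap_map_eq_of_injective (injective_subtype p) N')).trans ep⟩
    rcases (hleast p hmem).lt_or_eq with hlt | heq
    · exfalso
      have h1 : comap p.subtype ρ ≠ ⊤ := by
        rw [Ne, comap_subtype_eq_top]
        exact hlt.not_ge
      have h2 := hN'max _ h1
      have h3 : ρ ≤ map p.subtype N' := by
        have h4 := Submodule.map_mono (f := p.subtype) h2
        rwa [map_comap_subtype, inf_eq_right.mpr hlt.le] at h4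
      have hup : Phi S (map p.subtype N') ⊤ := by
        refine ⟨map p.subtype N', p, le_rfl, map_subtype_le p N', le_top, ?_⟩
        exact ⟨(Submodule.quotEquivOfEq _ _
          (comap_map_eq_of_injective (injective_subtype p) N')).trans ep⟩
      have hdown : Phi S ⊥ (map p.subtype N') := by
        obtain ⟨a, b, ha, hab, hb, he⟩ := hρmem
        exact ⟨a, b, ha, hab, hb.trans h3, he⟩
      exact hkey _ hdown hup
    · exact heq.symm
end
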